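/- Let H be a complex inner product space, let O : H → H be a self-adjoint linear map with O ∘ O = id, let a ∈ H be a unit vector with μ := ⟨a, O a⟩ satisfying |μ| < 1, write μ = cos(θ*) with θ* ∈ (0,π), and let Q := (2|a⟩⟨a| − id) ∘ O. Then for every natural number m, the mean value of O in the amplitude-amplified state Q^m a equals cos((2m+1)θ*): that is, ⟨Q^m a, O (Q^m a)⟩ = cos((2m+1) θ*). -/

import Mathlib

/-- Mean value of the observable `O` in the amplitude-amplified state `Q^m a`:
`⟨Q^m a, O(Q^m a)⟩ = cos((2m+1)θ*)`, where `Q = (2|a⟩⟨a| - I) ∘ O` and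
`cos θ* = μ = ⟨a, O a⟩`. -/
theorem stmt_13 (H : Type*) [NormedAddCommGroup H] [InnerProductSpace ℂ H]
    (O : H →ₗ[ℂ] H)
    (hsa : ∀ x y : H, (inner ℂ (O x) y : ℂ) = inner ℂ x (O y))
    (hO2 : ∀ x : H, O (O x) = x)
    (a : H) (ha : ‖a‖ = 1)
    (μ : ℝ) (hμ : (inner ℂ a (O a) : ℂ) = (μ : ℂ)) (hμlt : |μ| < 1)
    (θs : ℝ) (hθs : θs ∈ Set.Ioo 0 Real.pi) (hcosθ : Real.cos θs = μ)
    (Q : H → H)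
    (hQ : ∀ u : H, Q u = (2 * (inner ℂ a (O u) : ℂ)) • a - O u) :
    ∀ m : ℕ, (inner ℂ (Q^[m] a) (O (Q^[m] a)) : ℂ)
      = ((Real.cos ((2 * (m : ℝ) + 1) * θs) : ℝ) : ℂ) := by
  have hbase : (inner ℂ a a : ℂ) = 1 := by
    rw [inner_self_eq_norm_sq_to_K, ha]; norm_num
  have hOaa : (inner ℂ (O a) a : ℂ) = (μ : ℂ) := by rw [hsa a a, hμ]
  have hOaOa : (inner ℂ (O a) (O a) : ℂ) = 1 := by rw [hsa a (O a), hO2, hbase]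
  have hs : Real.sin θs ≠ 0 :=
    ne_of_gt (Real.sin_pos_of_pos_of_lt_pi hθs.1 hθs.2)
  have key : ∀ m : ℕ, Q^[m] a
      = ((Real.sin (((m : ℝ) + 1) * θs) / Real.sin θs : ℝ) : ℂ) • a
        + ((-(Real.sin ((m : ℝ) * θs) / Real.sin θs) : ℝ) : ℂ) • (O a) := by
    intro m
    induction m with
    | zero =>
        simp [div_self hs]
    | succ n ih =>
        rw [Function.iterate_succ_apply', ih, hQ]
        have hO : O (((Real.sin (((n : ℝ) + 1) * θs) / Real.sin θs : ℝ) : ℂ) • a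
              + ((-(Real.sin ((n : ℝ) * θs) / Real.sin θs) : ℝ) : ℂ) • (O a))
            = ((Real.sin (((n : ℝ) + 1) * θs) / Real.sin θs : ℝ) : ℂ) • O a
              + ((-(Real.sin ((n : ℝ) * θs) / Real.sin θs) : ℝ) : ℂ) • a := by
          rw [map_add, map_smul, map_smul, hO2]
        rw [hO]
        rw [inner_add_right, inner_smul_right, inner_smul_right, hμ, hbase]
        have hAc : 2 * ((Real.sin (((n : ℝ) + 1) * θs) / Real.sin θs) * μ
              + -(Real.sin ((n : ℝ) * θs) / Real.sin θs))
            = Real.sin (((n : ℝ) + 1 + 1) * θs) / Real.sin θs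
              + -(Real.sin ((n : ℝ) * θs) / Real.sin θs) := by
          rw [← hcosθ]
          have h2 : Real.sin (((n : ℝ) + 1 + 1) * θs) + Real.sin ((n : ℝ) * θs)
              = 2 * Real.sin (((n : ℝ) + 1) * θs) * Real.cos θs := by
            have e1 : ((n : ℝ) + 1 + 1) * θs = ((n : ℝ) + 1) * θs + θs := by ring
            have e2 : ((n : ℝ)) * θs = ((n : ℝ) + 1) * θs - θs := by ring
            rw [e1, e2, Real.sin_add, Real.sin_sub]; ring
          field_simp
          rw [mul_comm θs ((n : ℝ) + 1 + 1)]
          linarith [h2]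
        have hn1 : ((n : ℝ) + 1) = ((n + 1 : ℕ) : ℝ) := by push_cast; ring
        push_cast
        match_scalars
        · have := congrArg (Complex.ofReal) hAc
          push_cast at this
          linear_combination this
        · push_cast
          ring
  intro m
  rw [key m]
  have hO : O (((Real.sin (((m : ℝ) + 1) * θs) / Real.sin θs : ℝ) : ℂ) • a
        + ((-(Real.sin ((m : ℝ) * θs) / Real.sin θs) : ℝ) : ℂ) • (O a))
      = ((Real.sin (((m : ℝ) + 1) * θs) / Real.sin θs : ℝ) : ℂ) • O a
        + ((-(Real.sin ((m : ℝ) * θs) / Real.sin θs) : ℝ) : ℂ) • a := by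
    rw [map_add, map_smul, map_smul, hO2]
  rw [hO]
  simp only [inner_add_left, inner_add_right, inner_smul_left, inner_smul_right,
    hμ, hbase, hOaa, hOaOa, Complex.conj_ofReal]
  have htrig : ((Real.sin (((m : ℝ) + 1) * θs) / Real.sin θs) ^ 2
        + (Real.sin ((m : ℝ) * θs) / Real.sin θs) ^ 2) * μ
      - 2 * ((Real.sin (((m : ℝ) + 1) * θs) / Real.sin θs)
          * (Real.sin ((m : ℝ) * θs) / Real.sin θs))
      = Real.cos ((2 * (m : ℝ) + 1) * θs) := by
    rw [← hcosθ]
    have e1 : ((m : ℝ) + 1) * θs = (m : ℝ) * θs + θs := by ring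
    have e2 : (2 * (m : ℝ) + 1) * θs = (m : ℝ) * θs + ((m : ℝ) * θs + θs) := by ring
    rw [e1, e2, Real.sin_add, Real.cos_add, Real.cos_add, Real.sin_add]
    have p2 := Real.sin_sq_add_cos_sq θs
    field_simp
    linear_combination ((Real.sin ((m : ℝ) * θs) ^ 2 * Real.cos θs
      + 2 * Real.sin ((m : ℝ) * θs) * Real.cos ((m : ℝ) * θs) * Real.sin θs)) * p2
  rw [← htrig]
  push_cast
  ring
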